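/- Let n ≥ 3. Every legal play from ρ^(0) ending at a configuration of the form -ρ^(a) for some a ∈ ZMod n has length at least binomial(n,3). (Thus firing only vertices of amplitude strictly less than -1, which takes exactly binomial(n,3) moves, is the fastest way to play the numbers game from ρ^(0) to a configuration of the form -ρ^(a).) -/

import Mathlib

/-- The affine Cartan matrix of type `Ã_{n-1}`, indexed by `ZMod n`. -/
def A (n : ℕ) (i j : ZMod n) : ℤ :=
  if i = j then 2 else if j = i + 1 ∨ j = i - 1 then -1 else 0

/-- Firing vertex `i` in type `Ã_{n-1}`. -/
def fire (n : ℕ) (i : ZMod n) (v : ZMod n → ℝ) : ZMod n → ℝ :=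
  fun j => v j - (A n i j : ℝ) * v i

/-- The configuration resulting from firing the vertices in the list `l` successively. -/
def playResult (n : ℕ) : (ZMod n → ℝ) → List (ZMod n) → (ZMod n → ℝ)
  | v, [] => v
  | v, i :: l => playResult n (fire n i v) l

/-- `IsPlay n θ v l` : the list `l` is a sequence of successive firings starting at `v`
in which each fired vertex has amplitude strictly less than `θ` at the time it is fired.
With `θ = 0` this is a legal play; with `θ = -1` a `(<-1)`-play. -/
def IsPlay (n : ℕ) (θ : ℝ) : (ZMod n → ℝ) → List (ZMod n) → Prop
  | _, [] => True
  | v, i :: l => v i < θ ∧ IsPlay n θ (fire n i v) l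

/-- The configuration `ρ^(a)` : value `-(n-1)` at `a` and `1` elsewhere. -/
def rho (n : ℕ) (a : ZMod n) : ZMod n → ℝ :=
  fun j => if j = a then 1 - (n : ℝ) else 1

/-- The extending vertex `ι0`: the class of `n/2` if `n` is even, and `0` if `n` is odd. -/
def iota0 (n : ℕ) : ZMod n :=
  if Even n then ((n / 2 : ℕ) : ZMod n) else 0

namespace AffineGame

/-- The fixed integer value profile of the streams. -/
def xZ (n : ℕ) (m : ZMod n) : ℤ := if m = 0 then 0 else (m.val : ℤ) - n

/-- Real version. -/
noncomputable def xR (n : ℕ) (m : ZMod n) : ℝ := ((xZ n m : ℤ) : ℝ)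

/-- The potential. -/
def Phi (n : ℕ) [NeZero n] (p : ZMod n → ℤ) : ℤ :=
  ∑ m : ZMod n, ∑ m' : ZMod n, if xZ n m' < xZ n m then (p m' - p m) / (n : ℤ) else 0

/-- The simulation invariant. -/
structure Good (n : ℕ) (v : ZMod n → ℝ) (p : ZMod n → ℤ) (e : ZMod n ≃ ZMod n) : Prop where
  hres : ∀ m, ((p m : ℤ) : ZMod n) = e m
  hval : ∀ j, v j = xR n (e.symm (j + 1)) - xR n (e.symm j)

/-- Updated lift positions after firing `i`. -/
def upd (n : ℕ) (p : ZMod n → ℤ) (e : ZMod n ≃ ZMod n) (i : ZMod n) : ZMod n → ℤ :=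
  fun m => p m + (if e m = i then 1 else if e m = i + 1 then -1 else 0)

/-- Updated occupancy equivalence after firing `i`. -/
def swE (n : ℕ) (e : ZMod n ≃ ZMod n) (i : ZMod n) : ZMod n ≃ ZMod n :=
  e.trans (Equiv.swap i (i + 1))

section Basic

variable {n : ℕ}

lemma div_helper (hn : 0 < n) (a q r : ℤ) (h : a = n * q + r) (h0 : 0 ≤ r) (h1 : r < n) :
    a / (n : ℤ) = q := by
  have hne : (n : ℤ) ≠ 0 := by exact_mod_cast hn.ne'
  rw [h, show (n : ℤ) * q + r = r + (n : ℤ) * q by ring, Int.add_mul_ediv_left r q hne,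
    Int.ediv_eq_zero_of_lt h0 h1, zero_add]

lemma div_res [NeZero n] (D : ℤ) (c : ZMod n) (h : ((D : ℤ) : ZMod n) = c) :
    ∃ t : ℤ, D = n * t + c.val ∧ D / (n : ℤ) = t := by
  have hdvd : ((n : ℕ) : ℤ) ∣ (D - c.val) := by
    rw [← ZMod.intCast_zmod_eq_zero_iff_dvd]
    push_cast
    rw [h, ZMod.natCast_rightInverse c]
    ring
  obtain ⟨t, ht⟩ := hdvd
  have hn : 0 < n := Nat.pos_of_ne_zero (NeZero.ne n)
  refine ⟨t, by omega, div_helper hn _ t c.val (by omega) (by exact_mod_cast Nat.zero_le _) ?_⟩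
  exact_mod_cast ZMod.val_lt c

end Basic


section Step

variable {n : ℕ} [NeZero n] {v : ZMod n → ℝ} {p : ZMod n → ℤ} {e : ZMod n ≃ ZMod n}

lemma one_ne_zero' (hn : 3 ≤ n) : (1 : ZMod n) ≠ 0 := by
  have : ((1 : ℕ) : ZMod n) ≠ 0 := by
    rw [Ne, ZMod.natCast_eq_zero_iff]
    intro h
    have := Nat.le_of_dvd one_pos h
    omega
  simpa using this

lemma two_ne_zero' (hn : 3 ≤ n) : (2 : ZMod n) ≠ 0 := by
  have : ((2 : ℕ) : ZMod n) ≠ 0 := by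
    rw [Ne, ZMod.natCast_eq_zero_iff]
    intro h
    have := Nat.le_of_dvd (by norm_num) h
    omega
  simpa using this

lemma good_step (hn : 3 ≤ n) (hg : Good n v p e) (i : ZMod n) :
    Good n (fire n i v) (upd n p e i) (swE n e i) := by
  have h10 := one_ne_zero' hn
  have h20 := two_ne_zero' hn
  have hii1 : i + 1 ≠ i := fun h => h10 (by linear_combination h)
  have hm1 : i - 1 ≠ i := fun h => h10 (by linear_combination -h)
  have hm2 : i - 1 ≠ i + 1 := fun h => h20 (by linear_combination -h)
  have hp2 : i + 1 + 1 ≠ i := fun h => h20 (by linear_combination h)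
  have hp1 : i + 1 + 1 ≠ i + 1 := fun h => h10 (by linear_combination h)
  have hswE : ∀ j, (swE n e i).symm j = e.symm ((Equiv.swap i (i+1)) j) := by
    intro j
    rw [swE, Equiv.symm_trans_apply, Equiv.symm_swap]
  constructor
  · intro m
    have hrw : (((upd n p e i m : ℤ)) : ZMod n)
        = e m + (if e m = i then 1 else if e m = i + 1 then -1 else 0) := by
      rw [upd]
      push_cast [hg.hres m]
      split_ifs <;> norm_num
    rw [hrw, swE]
    simp only [Equiv.trans_apply]
    by_cases h1 : e m = i
    · rw [h1, if_pos rfl, Equiv.swap_apply_left]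
    · by_cases h2 : e m = i + 1
      · rw [h2, if_neg hii1, if_pos rfl, Equiv.swap_apply_right]
        ring
      · rw [if_neg h1, if_neg h2, Equiv.swap_apply_of_ne_of_ne h1 h2]
        ring
  · intro j
    have hv := hg.hval
    by_cases hj1 : j = i
    · subst hj1
      have hA : A n j j = 2 := by simp [A]
      rw [fire, hA, hswE, hswE]
      rw [Equiv.swap_apply_left, Equiv.swap_apply_right]
      push_cast
      rw [hv j]
      ring
    · by_cases hj2 : j = i + 1
      · subst hj2
        have hA : A n i (i+1) = -1 := by
          rw [A, if_neg (fun h => hii1 h.symm), if_pos (Or.inl rfl)]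
        rw [fire, hA, hswE, hswE]
        rw [Equiv.swap_apply_right, Equiv.swap_apply_of_ne_of_ne hp2 hp1]
        push_cast
        rw [hv (i+1), hv i]
        ring
      · by_cases hj3 : j = i - 1
        · subst hj3
          have hA : A n i (i-1) = -1 := by
            rw [A, if_neg (fun h => hm1 h.symm), if_pos (Or.inr rfl)]
          rw [fire, hA, hswE, hswE]
          have e0 : i - 1 + 1 = i := by ring
          rw [e0, Equiv.swap_apply_left, Equiv.swap_apply_of_ne_of_ne hm1 hm2]
          push_cast
          have := hv (i-1)
          rw [e0] at this
          rw [this, hv i]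
          ring
        · have hA : A n i j = 0 := by
            rw [A, if_neg (fun h => hj1 h.symm), if_neg]
            rintro (h | h)
            · exact hj2 h
            · exact hj3 h
          rw [fire, hA, hswE, hswE]
          rw [Equiv.swap_apply_of_ne_of_ne hj1 hj2,
            Equiv.swap_apply_of_ne_of_ne (fun h => hj3 (by linear_combination h))
              (fun h => hj1 (by linear_combination h))]
          push_cast
          rw [hv j]
          ring


lemma fired_lt (hg : Good n v p e) {i : ZMod n} (hi : v i < 0) :
    xZ n (e.symm (i+1)) < xZ n (e.symm i) := by
  have h := hg.hval i
  rw [h] at hi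
  have h2 : xR n (e.symm (i+1)) < xR n (e.symm i) := by linarith
  simp only [xR] at h2
  exact_mod_cast h2

lemma subL1 (hn : 3 ≤ n) (D : ℤ) (c : ZMod n) (h : ((D : ℤ) : ZMod n) = c) (hc : c ≠ 0) :
    (D - 1) / (n : ℤ) = D / (n : ℤ) := by
  obtain ⟨t, hD, hdiv⟩ := div_res D c h
  have hnpos : 0 < n := by omega
  have hn' : (3 : ℤ) ≤ (n : ℤ) := by exact_mod_cast hn
  have hv1 : c.val ≠ 0 := fun hh => hc ((ZMod.val_eq_zero c).mp hh)
  have hv2 : (c.val : ℤ) < n := by exact_mod_cast ZMod.val_lt c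
  have hv3 : 1 ≤ (c.val : ℤ) := by exact_mod_cast Nat.one_le_iff_ne_zero.mpr hv1
  rw [hdiv]
  exact div_helper hnpos _ t ((c.val : ℤ) - 1) (by rw [hD]; ring) (by omega) (by omega)

lemma subL2 (hn : 3 ≤ n) (D : ℤ) (c : ZMod n) (h : ((D : ℤ) : ZMod n) = c) (hc : c ≠ -1) :
    (D + 1) / (n : ℤ) = D / (n : ℤ) := by
  obtain ⟨t, hD, hdiv⟩ := div_res D c h
  have hnpos : 0 < n := by omega
  have hn' : (3 : ℤ) ≤ (n : ℤ) := by exact_mod_cast hn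
  have hv2 : (c.val : ℤ) < n := by exact_mod_cast ZMod.val_lt c
  have hv1 : (c.val : ℤ) ≠ (n : ℤ) - 1 := by
    intro hh
    apply hc
    have hcv : ((c.val : ℕ) : ZMod n) = c := ZMod.natCast_rightInverse c
    have : c.val = n - 1 := by omega
    rw [← hcv, this, Nat.cast_sub (by omega), ZMod.natCast_self]
    push_cast
    ring
  rw [hdiv]
  exact div_helper hnpos _ t ((c.val : ℤ) + 1) (by rw [hD]; ring) (by omega) (by omega)

lemma step_pair (hn : 3 ≤ n) (hg : Good n v p e) {i : ZMod n} (hi : v i < 0)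
    (m m' : ZMod n) (hx : xZ n m' < xZ n m) :
    (upd n p e i m' - upd n p e i m) / (n : ℤ)
      = (p m' - p m) / (n : ℤ) - (if m = e.symm i ∧ m' = e.symm (i+1) then 1 else 0) := by
  haveI : Fact (1 < n) := ⟨by omega⟩
  have hnpos : 0 < n := by omega
  have hn' : (3 : ℤ) ≤ (n : ℤ) := by exact_mod_cast hn
  have h10 := one_ne_zero' hn
  have hii1 : i + 1 ≠ i := fun h => h10 (by linear_combination h)
  have hmm' : m' ≠ m := fun h => by rw [h] at hx; exact lt_irrefl _ hx
  have hres : ((p m' - p m : ℤ) : ZMod n) = e m' - e m := by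
    push_cast [hg.hres]
    ring
  have hmiff : m = e.symm i ↔ e m = i := by
    constructor
    · intro h; rw [h]; exact e.apply_symm_apply i
    · intro h; rw [← h]; exact (e.symm_apply_apply m).symm
  have hmiff' : m' = e.symm (i+1) ↔ e m' = i + 1 := by
    constructor
    · intro h; rw [h]; exact e.apply_symm_apply _
    · intro h; rw [← h]; exact (e.symm_apply_apply m').symm
  by_cases hm : e m = i
  · by_cases hm' : e m' = i + 1
    · -- the swapped pair
      have h1 : upd n p e i m = p m + 1 := by simp [upd, hm]
      have h2 : upd n p e i m' = p m' + -1 := by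
        have : e m' ≠ i := by rw [hm']; exact hii1
        simp [upd, this, hm']
      have hc1 : ((p m' - p m : ℤ) : ZMod n) = 1 := by rw [hres, hm, hm']; ring
      obtain ⟨t, hD, hdiv⟩ := div_res (p m' - p m) 1 hc1
      have hval1 : ((1 : ZMod n).val : ℤ) = 1 := by
        rw [ZMod.val_one n]
        norm_num
      rw [hval1] at hD
      rw [h1, h2, if_pos ⟨hmiff.mpr hm, hmiff'.mpr hm'⟩, hdiv]
      have : p m' + -1 - (p m + 1) = (p m' - p m) + -2 := by ring
      rw [this]
      exact div_helper hnpos _ (t - 1) ((n : ℤ) - 1) (by rw [hD]; ring) (by omega) (by omega)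
    · have hm'i : e m' ≠ i := fun h => hmm' (e.injective (by rw [h, hm]))
      have h1 : upd n p e i m = p m + 1 := by simp [upd, hm]
      have h2 : upd n p e i m' = p m' := by simp [upd, hm'i, hm']
      rw [h1, h2, if_neg (fun hh => hm' (hmiff'.mp hh.2))]
      have : p m' - (p m + 1) = (p m' - p m) - 1 := by ring
      rw [this, sub_zero]
      exact subL1 hn _ (e m' - e m) hres (by rw [hm]; exact sub_ne_zero.mpr hm'i)
  · by_cases hm' : e m' = i + 1
    · have hmi1 : e m ≠ i + 1 := fun h => hmm' (e.injective (by rw [h, hm']))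
      have h1 : upd n p e i m = p m := by simp [upd, hm, hmi1]
      have h2 : upd n p e i m' = p m' + -1 := by
        have : e m' ≠ i := by rw [hm']; exact hii1
        simp [upd, this, hm']
      rw [h1, h2, if_neg (fun hh => hm (hmiff.mp hh.1))]
      have : p m' + -1 - p m = (p m' - p m) - 1 := by ring
      rw [this, sub_zero]
      refine subL1 hn _ (e m' - e m) hres ?_
      rw [hm']
      exact sub_ne_zero.mpr (fun h => hmi1 h.symm)
    · by_cases hb : e m = i + 1
      · by_cases hb' : e m' = i
        · -- would be the anti-sorted swap; contradicts hx
          exfalso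
          have hma : m = e.symm (i+1) := by rw [← hb, e.symm_apply_apply]
          have hmb : m' = e.symm i := by rw [← hb', e.symm_apply_apply]
          have := fired_lt hg hi
          rw [← hma, ← hmb] at this
          exact lt_asymm hx this
        · have h1 : upd n p e i m = p m + -1 := by
            have : e m ≠ i := hm
            simp [upd, this, hb]
          have h2 : upd n p e i m' = p m' := by simp [upd, hb', hm']
          rw [h1, h2, if_neg (fun hh => hm (hmiff.mp hh.1))]
          have : p m' - (p m + -1) = (p m' - p m) + 1 := by ring
          rw [this, sub_zero]
          refine subL2 hn _ (e m' - e m) hres ?_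
          rw [hb]
          intro h
          exact hb' (by linear_combination h)
      · by_cases hb' : e m' = i
        · have h1 : upd n p e i m = p m := by simp [upd, hm, hb]
          have h2 : upd n p e i m' = p m' + 1 := by simp [upd, hb']
          rw [h1, h2, if_neg (fun hh => hm (hmiff.mp hh.1))]
          have : p m' + 1 - p m = (p m' - p m) + 1 := by ring
          rw [this, sub_zero]
          refine subL2 hn _ (e m' - e m) hres ?_
          rw [hb']
          intro h
          exact hb (by linear_combination -h)
        · have h1 : upd n p e i m = p m := by simp [upd, hm, hb]
          have h2 : upd n p e i m' = p m' := by simp [upd, hb', hm']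
          rw [h1, h2, if_neg (fun hh => hm (hmiff.mp hh.1)), sub_zero]

lemma band_step (hn : 3 ≤ n) (hg : Good n v p e) {i : ZMod n} (hi : v i < 0)
    (m m' : ZMod n) (hx : xZ n m' < xZ n m) :
    (upd n p e i m' - upd n p e i m) / (n : ℤ) ≤ (p m' - p m) / (n : ℤ) := by
  rw [step_pair hn hg hi m m' hx]
  split_ifs <;> omega

lemma Phi_step (hn : 3 ≤ n) (hg : Good n v p e) {i : ZMod n} (hi : v i < 0) :
    Phi n (upd n p e i) = Phi n p - 1 := by
  classical
  have hA := fired_lt hg hi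
  unfold Phi
  have hrw : ∀ m m' : ZMod n,
      (if xZ n m' < xZ n m then (upd n p e i m' - upd n p e i m) / (n : ℤ) else 0)
        = (if xZ n m' < xZ n m then (p m' - p m) / (n : ℤ) else 0)
          - (if m = e.symm i ∧ m' = e.symm (i+1) then 1 else 0) := by
    intro m m'
    by_cases hx : xZ n m' < xZ n m
    · rw [if_pos hx, if_pos hx, step_pair hn hg hi m m' hx]
    · rw [if_neg hx, if_neg hx]
      have : ¬(m = e.symm i ∧ m' = e.symm (i+1)) := by
        rintro ⟨h1, h2⟩
        rw [h1, h2] at hx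
        exact hx hA
      rw [if_neg this]
      ring
  calc (∑ m : ZMod n, ∑ m' : ZMod n,
        if xZ n m' < xZ n m then (upd n p e i m' - upd n p e i m) / (n : ℤ) else 0)
      = ∑ m : ZMod n, ∑ m' : ZMod n,
        ((if xZ n m' < xZ n m then (p m' - p m) / (n : ℤ) else 0)
          - (if m = e.symm i ∧ m' = e.symm (i+1) then 1 else 0)) := by
        refine Finset.sum_congr rfl (fun m _ => Finset.sum_congr rfl (fun m' _ => hrw m m'))
    _ = (∑ m : ZMod n, ∑ m' : ZMod n, if xZ n m' < xZ n m then (p m' - p m) / (n : ℤ) else 0)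
          - ∑ m : ZMod n, ∑ m' : ZMod n,
            (if m = e.symm i ∧ m' = e.symm (i+1) then (1:ℤ) else 0) := by
        rw [← Finset.sum_sub_distrib]
        refine Finset.sum_congr rfl (fun m _ => ?_)
        rw [← Finset.sum_sub_distrib]
    _ = Phi n p - 1 := by
        rw [Phi]
        congr 1
        have : ∀ m : ZMod n, (∑ m' : ZMod n,
            if m = e.symm i ∧ m' = e.symm (i+1) then (1:ℤ) else 0)
            = if m = e.symm i then 1 else 0 := by
          intro m
          by_cases hm : m = e.symm i
          · simp only [hm, true_and, if_pos rfl]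
            rw [Finset.sum_ite_eq' Finset.univ (e.symm (i+1)) (fun _ => (1:ℤ))]
            simp
          · simp [hm]
        rw [Finset.sum_congr rfl (fun m _ => this m),
          Finset.sum_ite_eq' Finset.univ (e.symm i) (fun _ => (1:ℤ))]
        simp


lemma sim (hn : 3 ≤ n) (l : List (ZMod n)) :
    ∀ (v : ZMod n → ℝ) (p : ZMod n → ℤ) (e : ZMod n ≃ ZMod n),
      IsPlay n 0 v l → Good n v p e →
      ∃ p' e', Good n (playResult n v l) p' e' ∧
        Phi n p' = Phi n p - l.length ∧
        ∀ m m', xZ n m' < xZ n m → (p' m' - p' m) / (n:ℤ) ≤ (p m' - p m) / (n:ℤ) := by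
  induction l with
  | nil =>
    intro v p e _ hg
    exact ⟨p, e, hg, by simp, fun _ _ _ => le_refl _⟩
  | cons i l ih =>
    intro v p e hpl hg
    obtain ⟨hi, hpl'⟩ := hpl
    obtain ⟨p', e', h1, h2, h3⟩ :=
      ih (fire n i v) (upd n p e i) (swE n e i) hpl' (good_step hn hg i)
    refine ⟨p', e', h1, ?_, fun m m' hx => le_trans (h3 m m' hx) (band_step hn hg hi m m' hx)⟩
    rw [h2, Phi_step hn hg hi]
    simp
    ring

/-- The initial lift. -/
def p0 (n : ℕ) : ZMod n → ℤ := fun m => (m.val : ℤ)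

lemma val_add_one {j : ZMod n} (h : j + 1 ≠ 0) : (j + 1).val = j.val + 1 := by
  have hj : ((j.val + 1 : ℕ) : ZMod n) = j + 1 := by
    push_cast
    rw [ZMod.natCast_rightInverse j]
  have hlt : j.val + 1 < n := by
    by_contra hcon
    have := ZMod.val_lt j
    have hE : j.val + 1 = n := by omega
    apply h
    rw [← hj, hE, ZMod.natCast_self]
  rw [← hj, ZMod.val_natCast_of_lt hlt]

lemma good_init (hn : 3 ≤ n) : Good n (rho n 0) (p0 n) (Equiv.refl (ZMod n)) := by
  have h10 := one_ne_zero' hn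
  constructor
  · intro m
    simp only [p0, Equiv.refl_apply]
    push_cast
    exact ZMod.natCast_rightInverse m
  · intro j
    show rho n 0 j = xR n (j + 1) - xR n j
    simp only [Equiv.refl_symm, Equiv.refl_apply, rho, xR, xZ]
    by_cases hj : j = 0
    · subst hj
      rw [if_pos rfl, show (0:ZMod n) + 1 = 1 by ring, if_neg h10, if_pos rfl]
      haveI : Fact (1 < n) := ⟨by omega⟩
      rw [ZMod.val_one n]
      push_cast
      ring
    · rw [if_neg hj, if_neg hj]
      by_cases hj1 : j + 1 = 0
      · rw [if_pos hj1]
        have hval : j.val = n - 1 := by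
          have hc : ((j.val + 1 : ℕ) : ZMod n) = 0 := by
            push_cast
            rw [ZMod.natCast_rightInverse j]
            exact hj1
          rw [ZMod.natCast_eq_zero_iff] at hc
          have h1 := Nat.le_of_dvd (by omega) hc
          have h2 := ZMod.val_lt j
          omega
        rw [hval]
        push_cast [Nat.cast_sub (by omega : 1 ≤ n)]
        ring
      · rw [if_neg hj1, val_add_one hj1]
        push_cast
        ring

lemma end_struct (hn : 3 ≤ n) (a : ZMod n) (q : ZMod n → ℤ) (e : ZMod n ≃ ZMod n)
    (hg : Good n (fun j => -(rho n a j)) q e) :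
    ∀ m, ((q m : ℤ) : ZMod n) = a + 1 - m := by
  have hval := hg.hval
  have hstep : ∀ j, j ≠ a → xZ n (e.symm (j+1)) = xZ n (e.symm j) - 1 := by
    intro j hj
    have h := hval j
    simp only [rho, if_neg hj] at h
    have h2 : xR n (e.symm (j+1)) = xR n (e.symm j) - 1 := by linarith
    simp only [xR] at h2
    exact_mod_cast h2
  have htel : ∀ s : ℕ, s < n → xZ n (e.symm (a + 1 + (s:ZMod n))) = xZ n (e.symm (a+1)) - s := by
    intro s
    induction s with
    | zero => intro _; simp
    | succ t ih =>
      intro hs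
      have ht := ih (by omega)
      have hne : a + 1 + (t : ZMod n) ≠ a := by
        intro h
        have h2 : ((t + 1 : ℕ) : ZMod n) = 0 := by
          push_cast
          linear_combination h
        rw [ZMod.natCast_eq_zero_iff] at h2
        have := Nat.le_of_dvd (by omega) h2
        omega
      have hst := hstep _ hne
      have harr : a + 1 + (t : ZMod n) + 1 = a + 1 + ((t+1 : ℕ) : ZMod n) := by
        push_cast
        ring
      rw [harr] at hst
      rw [hst, ht]
      push_cast
      ring
  have hle : ∀ m : ZMod n, xZ n m ≤ 0 := by
    intro m
    rw [xZ]
    split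
    · exact le_refl 0
    · have h1 : (m.val : ℤ) < n := by exact_mod_cast ZMod.val_lt m
      omega
  have hsur : ∀ m : ZMod n, ∃ s : ℕ, s < n ∧ e.symm (a + 1 + (s : ZMod n)) = m := by
    intro m
    refine ⟨(e m - (a+1)).val, ZMod.val_lt _, ?_⟩
    rw [ZMod.natCast_rightInverse (e m - (a+1))]
    rw [show a + 1 + (e m - (a + 1)) = e m by ring, e.symm_apply_apply]
  have ht0 : xZ n (e.symm (a+1)) = 0 := by
    refine le_antisymm (hle _) ?_
    obtain ⟨s, hs, hes⟩ := hsur 0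
    have h1 := htel s hs
    rw [hes] at h1
    have h0 : xZ n (0 : ZMod n) = 0 := by simp [xZ]
    rw [h0] at h1
    omega
  intro m
  obtain ⟨s, hs, hes⟩ := hsur m
  have hxm : xZ n m = -(s:ℤ) := by
    rw [← hes, htel s hs, ht0]
    ring
  have hcast : ((s:ℕ) : ZMod n) = -m := by
    by_cases hm : m = 0
    · subst hm
      have h0 : xZ n (0 : ZMod n) = 0 := by simp [xZ]
      rw [h0] at hxm
      have hs0 : s = 0 := by omega
      rw [hs0]
      push_cast
      ring
    · have hv : (m.val : ℤ) - n = -(s:ℤ) := by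
        rw [xZ, if_neg hm] at hxm
        exact hxm
      have hvlt := ZMod.val_lt m
      have hvlt' : (m.val : ℤ) < n := by exact_mod_cast hvlt
      have hseq : s = n - m.val := by omega
      rw [hseq, Nat.cast_sub (le_of_lt hvlt), ZMod.natCast_self,
        ZMod.natCast_rightInverse m]
      ring
  have happ : a + 1 + ((s:ℕ) : ZMod n) = e m := by
    rw [← hes, e.apply_symm_apply]
  rw [hg.hres m, ← happ, hcast]
  ring


lemma lab_eq_zero_iff (hn : 3 ≤ n) {k : ℕ} (hk : k < n) :
    (((k+1 : ℕ) : ZMod n) = 0) ↔ k = n - 1 := by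
  constructor
  · intro h
    rw [ZMod.natCast_eq_zero_iff] at h
    have := Nat.le_of_dvd (by omega) h
    omega
  · intro h
    subst h
    rw [show n - 1 + 1 = n by omega, ZMod.natCast_self]

lemma xz_lab (hn : 3 ≤ n) {k : ℕ} (hk : k < n) :
    xZ n ((k+1 : ℕ) : ZMod n) = if k = n - 1 then 0 else (k:ℤ) + 1 - n := by
  by_cases h : k = n - 1
  · rw [if_pos h, xZ, if_pos ((lab_eq_zero_iff hn hk).mpr h)]
  · rw [if_neg h, xZ, if_neg (fun hh => h ((lab_eq_zero_iff hn hk).mp hh))]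
    rw [ZMod.val_natCast_of_lt (by omega : k + 1 < n)]
    push_cast
    ring

lemma p0_lab (hn : 3 ≤ n) {k : ℕ} (hk : k < n) :
    p0 n ((k+1 : ℕ) : ZMod n) = if k = n - 1 then 0 else (k:ℤ) + 1 := by
  by_cases h : k = n - 1
  · rw [if_pos h, p0, (lab_eq_zero_iff hn hk).mpr h]
    simp
  · rw [if_neg h, p0]
    rw [ZMod.val_natCast_of_lt (by omega : k + 1 < n)]
    push_cast
    ring

lemma xlt_iff (hn : 3 ≤ n) {k k' : ℕ} (hk : k < n) (hk' : k' < n) :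
    (xZ n ((k'+1 : ℕ) : ZMod n) < xZ n ((k+1 : ℕ) : ZMod n)) ↔ k' < k := by
  rw [xz_lab hn hk, xz_lab hn hk']
  split_ifs with h1 h2 h2 <;> omega

lemma sum_transport (hn : 3 ≤ n) (g : ZMod n → ℤ) :
    (∑ m : ZMod n, g m) = ∑ k ∈ Finset.range n, g ((k+1 : ℕ) : ZMod n) := by
  refine (Finset.sum_nbij' (fun k => ((k+1 : ℕ) : ZMod n)) (fun m => (m - 1).val)
    (fun k _ => Finset.mem_univ _) (fun m _ => Finset.mem_range.mpr (ZMod.val_lt _))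
    ?_ ?_ (fun k _ => rfl)).symm
  · intro k hk
    show ((((k+1:ℕ):ZMod n)) - 1).val = k
    have h1 : ((k+1:ℕ):ZMod n) - 1 = ((k:ℕ) : ZMod n) := by push_cast; ring
    rw [h1, ZMod.val_natCast_of_lt (Finset.mem_range.mp hk)]
  · intro m _
    show (((m - 1).val + 1 : ℕ) : ZMod n) = m
    push_cast
    rw [ZMod.natCast_rightInverse (m - 1)]
    ring

lemma inner_eq {M : Type*} [AddCommMonoid M] (f : ℕ → M) (k N : ℕ) (hk : k ≤ N) :
    (∑ k' ∈ Finset.range N, (if k' < k then f k' else 0)) = ∑ k' ∈ Finset.range k, f k' := by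
  rw [← Finset.sum_filter]
  congr 1
  ext x
  simp only [Finset.mem_filter, Finset.mem_range]
  omega

lemma t2 : ∀ k : ℕ, 2 * (∑ k' ∈ Finset.range k, ((k:ℤ) - k')) = k * (k+1) := by
  intro k
  induction k with
  | zero => simp
  | succ k ih =>
    have hsplit : (∑ k' ∈ Finset.range (k+1), (((k+1:ℕ):ℤ) - k'))
        = (∑ k' ∈ Finset.range k, ((k:ℤ) - k')) + (k + 1) := by
      rw [Finset.sum_range_succ]
      have : ∀ k' ∈ Finset.range k, (((k+1:ℕ):ℤ) - k') = ((k:ℤ) - k') + 1 := by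
        intro k' _
        push_cast
        ring
      rw [Finset.sum_congr rfl this, Finset.sum_add_distrib, Finset.sum_const,
        Finset.card_range]
      push_cast
      ring
    rw [hsplit]
    push_cast at ih ⊢
    linarith

lemma t3 : ∀ N : ℕ, 2 * (∑ k' ∈ Finset.range N, ((N:ℤ) - 1 - k')) = N * (N-1) := by
  intro N
  induction N with
  | zero => simp
  | succ N ih =>
    have hsplit : (∑ k' ∈ Finset.range (N+1), (((N+1:ℕ):ℤ) - 1 - k'))
        = (∑ k' ∈ Finset.range N, ((N:ℤ) - 1 - k')) + N := by
      rw [Finset.sum_range_succ]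
      have : ∀ k' ∈ Finset.range N, (((N+1:ℕ):ℤ) - 1 - k') = ((N:ℤ) - 1 - k') + 1 := by
        intro k' _
        push_cast
        ring
      rw [Finset.sum_congr rfl this, Finset.sum_add_distrib, Finset.sum_const,
        Finset.card_range]
      push_cast
      ring
    rw [hsplit]
    push_cast at ih ⊢
    linarith

lemma u2 : ∀ N : ℕ, (∑ k ∈ Finset.range N, 3 * (k:ℤ) * ((k:ℤ)-1)) = N * ((N:ℤ)-1) * ((N:ℤ)-2) := by
  intro N
  induction N with
  | zero => simp
  | succ N ih =>
    rw [Finset.sum_range_succ, ih]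
    push_cast
    ring


lemma choose2_id : ∀ m : ℕ, ((m+2).choose 2 : ℤ) * 2 = (m+2) * (m+1) := by
  intro m
  induction m with
  | zero => norm_num
  | succ m ih =>
    rw [show m+1+2 = (m+2)+1 by omega, show (2:ℕ) = 1 + 1 by norm_num,
      Nat.choose_succ_succ (m+2) 1, Nat.choose_one_right]
    push_cast
    push_cast at ih
    linear_combination ih

lemma choose3_id : ∀ m : ℕ, ((m+3).choose 3 : ℤ) * 6 = (m+3) * (m+2) * (m+1) := by
  intro m
  induction m with
  | zero => norm_num
  | succ m ih =>
    rw [show m+1+3 = (m+3)+1 by omega, show (3:ℕ) = 2 + 1 by norm_num,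
      Nat.choose_succ_succ (m+3) 2]
    have h2 := choose2_id (m+1)
    rw [show m+1+2 = m+3 by omega] at h2
    push_cast
    push_cast at ih h2
    linear_combination ih + 3 * h2

lemma final (hn : 3 ≤ n) (a : ZMod n) (q : ZMod n → ℤ)
    (hres : ∀ m, ((q m : ℤ) : ZMod n) = a + 1 - m)
    (hband : ∀ m m', xZ n m' < xZ n m →
      (q m' - q m) / (n:ℤ) ≤ (p0 n m' - p0 n m) / (n:ℤ)) :
    Phi n q ≤ Phi n (p0 n) - ((n.choose 3 : ℕ) : ℤ) := by
  classical
  have hnpos : 0 < n := by omega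
  have hnz : (3:ℤ) ≤ (n:ℤ) := by exact_mod_cast hn
  have hPhi2 : ∀ r : ZMod n → ℤ, Phi n r = ∑ k ∈ Finset.range n, ∑ k' ∈ Finset.range n,
      if k' < k then (r ((k'+1:ℕ):ZMod n) - r ((k+1:ℕ):ZMod n)) / (n:ℤ) else 0 := by
    intro r
    rw [Phi, sum_transport hn]
    refine Finset.sum_congr rfl (fun k hk => ?_)
    rw [sum_transport hn (fun m' =>
      if xZ n m' < xZ n ((k+1:ℕ):ZMod n) then (r m' - r ((k+1:ℕ):ZMod n))/(n:ℤ) else 0)]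
    refine Finset.sum_congr rfl (fun k' hk' => ?_)
    rw [if_congr (xlt_iff hn (Finset.mem_range.mp hk) (Finset.mem_range.mp hk')) rfl rfl]
  have hbandN : ∀ k' k : ℕ, k' < k → k < n →
      (q ((k'+1:ℕ):ZMod n) - q ((k+1:ℕ):ZMod n))/(n:ℤ)
        ≤ (p0 n ((k'+1:ℕ):ZMod n) - p0 n ((k+1:ℕ):ZMod n))/(n:ℤ) := by
    intro k' k hkk hkn
    exact hband _ _ ((xlt_iff hn hkn (by omega)).mpr hkk)
  have hPterm : ∀ k' k : ℕ, k' < k → k < n →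
      (p0 n ((k'+1:ℕ):ZMod n) - p0 n ((k+1:ℕ):ZMod n))/(n:ℤ)
        = if k = n - 1 then 0 else -1 := by
    intro k' k hkk hkn
    have hk'n : k' < n := by omega
    rw [p0_lab hn hkn, p0_lab hn hk'n, if_neg (by omega : ¬ k' = n - 1)]
    by_cases h : k = n - 1
    · rw [if_pos h, if_pos h]
      exact div_helper hnpos _ 0 ((k':ℤ)+1) (by ring) (by omega) (by omega)
    · rw [if_neg h, if_neg h]
      exact div_helper hnpos _ (-1) ((n:ℤ) + ((k':ℤ)+1) - ((k:ℤ)+1))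
        (by ring) (by omega) (by omega)
  have hDres : ∀ k k' : ℕ, ((q ((k'+1:ℕ):ZMod n) - q ((k+1:ℕ):ZMod n) : ℤ) : ZMod n)
      = ((k:ℕ) : ZMod n) - ((k':ℕ) : ZMod n) := by
    intro k k'
    push_cast [hres]
    ring
  have hgap : ∀ k : ℕ, k ≤ n - 3 →
      q ((k+1:ℕ):ZMod n) - q ((k+1+1:ℕ):ZMod n) ≤ 1 - (n:ℤ) := by
    intro k hk
    have hres1 : ((q ((k+1:ℕ):ZMod n) - q ((k+1+1:ℕ):ZMod n) : ℤ) : ZMod n)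
        = (((1:ℕ)) : ZMod n) := by
      rw [hDres (k+1) k]
      push_cast
      ring
    obtain ⟨t, hD, hdiv⟩ := div_res _ _ hres1
    rw [ZMod.val_natCast_of_lt (by omega : 1 < n)] at hD
    have hb := hbandN k (k+1) (by omega) (by omega)
    rw [hPterm k (k+1) (by omega) (by omega), if_neg (by omega : ¬ k + 1 = n - 1), hdiv] at hb
    have hmul : (n:ℤ) * t ≤ (n:ℤ) * (-1) := by
      apply mul_le_mul_of_nonneg_left hb (by positivity)
    rw [Nat.cast_one] at hD
    linarith
  have hchain : ∀ d k' : ℕ, k' + d ≤ n - 2 →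
      q ((k'+1:ℕ):ZMod n) ≤ q ((k'+d+1:ℕ):ZMod n) - (d:ℤ) * ((n:ℤ) - 1) := by
    intro d
    induction d with
    | zero => intro k' _; simp
    | succ d ih =>
      intro k' hk
      have h1 := ih k' (by omega)
      have h2 := hgap (k'+d) (by omega)
      rw [show k'+(d+1)+1 = k'+d+1+1 by omega]
      push_cast at h1 h2 ⊢
      linarith
  have htop : ∀ k' : ℕ, k' ≤ n - 2 →
      q ((k'+1:ℕ):ZMod n) - q ((n-1+1:ℕ):ZMod n) ≤ (n:ℤ) - 1 := by
    intro k' hk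
    obtain ⟨t, hD, hdiv⟩ := div_res _ _ (hDres (n-1) k')
    have hb := hbandN k' (n-1) (by omega) (by omega)
    rw [hPterm k' (n-1) (by omega) (by omega), if_pos rfl, hdiv] at hb
    have hmul : (n:ℤ) * t ≤ (n:ℤ) * 0 := by
      apply mul_le_mul_of_nonneg_left hb (by positivity)
    have hvlt : (((((n-1:ℕ)) : ZMod n) - ((k':ℕ) : ZMod n)).val : ℤ) < n := by
      exact_mod_cast ZMod.val_lt _
    linarith
  have hT1 : ∀ k' k : ℕ, k' < k → k ≤ n - 2 →
      (q ((k'+1:ℕ):ZMod n) - q ((k+1:ℕ):ZMod n))/(n:ℤ) ≤ -((k:ℤ) - k') := by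
    intro k' k hkk hkn
    have hsub : (((k - k' : ℕ)) : ZMod n) = ((k:ℕ):ZMod n) - ((k':ℕ):ZMod n) := by
      rw [Nat.cast_sub (le_of_lt hkk)]
    obtain ⟨t, hD, hdiv⟩ := div_res _ _ ((hDres k k').trans hsub.symm)
    rw [ZMod.val_natCast_of_lt (by omega : k - k' < n)] at hD
    have hch := hchain (k - k') k' (by omega)
    rw [show k' + (k - k') = k by omega] at hch
    have hcast : ((k - k' : ℕ) : ℤ) = (k:ℤ) - k' := by omega
    rw [hcast] at hD
    rw [hdiv]
    have h1 : (n:ℤ) * t ≤ (n:ℤ) * (-((k:ℤ) - k')) := by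
      have e : -((k:ℤ)-k')*((n:ℤ)-1) - ((k:ℤ)-k') = (n:ℤ) * (-((k:ℤ) - k')) := by ring
      rw [hcast] at hch
      linarith
    exact le_of_mul_le_mul_left h1 (by positivity)
  have hT2 : ∀ k' : ℕ, k' ≤ n - 2 →
      (q ((k'+1:ℕ):ZMod n) - q ((n-1+1:ℕ):ZMod n))/(n:ℤ) ≤ -((n:ℤ) - 2 - k') := by
    intro k' hk
    have hsub : (((n-1-k' : ℕ)) : ZMod n) = (((n-1:ℕ)):ZMod n) - ((k':ℕ):ZMod n) := by
      rw [Nat.cast_sub (by omega : k' ≤ n - 1)]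
    obtain ⟨t, hD, hdiv⟩ := div_res _ _ ((hDres (n-1) k').trans hsub.symm)
    rw [ZMod.val_natCast_of_lt (by omega : n-1-k' < n)] at hD
    have hcast1 : ((n-1-k' : ℕ) : ℤ) = (n:ℤ) - 1 - k' := by omega
    rw [hcast1] at hD
    have hch := hchain (n-2-k') k' (by omega)
    rw [show k' + (n-2-k') = n-2 by omega] at hch
    have hcast2 : ((n-2-k' : ℕ) : ℤ) = (n:ℤ) - 2 - k' := by omega
    rw [hcast2] at hch
    have ht := htop (n-2) (by omega)
    rw [hdiv]
    have h1 : (n:ℤ) * t < (n:ℤ) * (1 - ((n:ℤ) - 2 - k')) := by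
      have e : ((n:ℤ)-1) - ((n:ℤ)-2-(k':ℤ))*((n:ℤ)-1) - ((n:ℤ)-1-k')
          = (n:ℤ)*(1 - ((n:ℤ)-2-k')) - 2 := by ring
      linarith
    have h2 : t < 1 - ((n:ℤ) - 2 - k') := lt_of_mul_lt_mul_left h1 (by positivity)
    linarith
  -- assembled bounds
  have hQb : Phi n q ≤ ∑ k ∈ Finset.range n, ∑ k' ∈ Finset.range n,
      (if k' < k then (if k = n-1 then -((n:ℤ) - 2 - k') else -((k:ℤ) - k')) else 0) := by
    rw [hPhi2 q]
    refine Finset.sum_le_sum (fun k hk => Finset.sum_le_sum (fun k' hk' => ?_))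
    by_cases h : k' < k
    · rw [if_pos h, if_pos h]
      by_cases htp : k = n-1
      · rw [if_pos htp, htp]
        exact hT2 k' (by have := Finset.mem_range.mp hk; omega)
      · rw [if_neg htp]
        exact hT1 k' k h (by have := Finset.mem_range.mp hk; omega)
    · rw [if_neg h, if_neg h]
  have hPeval : Phi n (p0 n) = ∑ k ∈ Finset.range n, ∑ k' ∈ Finset.range n,
      (if k' < k then (if k = n-1 then (0:ℤ) else -1) else 0) := by
    rw [hPhi2 (p0 n)]
    refine Finset.sum_congr rfl (fun k hk => Finset.sum_congr rfl (fun k' _ => ?_))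
    by_cases h : k' < k
    · rw [if_pos h, if_pos h, hPterm k' k h (Finset.mem_range.mp hk)]
    · rw [if_neg h, if_neg h]
  -- split off the top row
  have hsplit : ∀ f : ℕ → ℤ,
      (∑ k ∈ Finset.range n, f k) = (∑ k ∈ Finset.range (n-1), f k) + f (n-1) := by
    intro f
    rw [← Finset.sum_range_succ, show n - 1 + 1 = n by omega]
  -- evaluate the bound sum
  have hB : (∑ k ∈ Finset.range n, ∑ k' ∈ Finset.range n,
      (if k' < k then (if k = n-1 then -((n:ℤ) - 2 - k') else -((k:ℤ) - k')) else 0))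
      = (∑ k ∈ Finset.range (n-1), ∑ k' ∈ Finset.range k, (-((k:ℤ) - k')))
        + (∑ k' ∈ Finset.range (n-1), (-((n:ℤ) - 2 - k'))) := by
    rw [hsplit]
    congr 1
    · refine Finset.sum_congr rfl (fun k hk => ?_)
      have hkn : k < n - 1 := Finset.mem_range.mp hk
      have h1 : ∀ k' ∈ Finset.range n,
          (if k' < k then (if k = n-1 then -((n:ℤ) - 2 - k') else -((k:ℤ) - k')) else 0)
            = (if k' < k then -((k:ℤ) - k') else 0) := by
        intro k' _
        rw [if_neg (by omega : ¬ k = n-1)]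
      rw [Finset.sum_congr rfl h1, inner_eq (fun k' => -((k:ℤ) - k')) k n (by omega)]
    · have h1 : ∀ k' ∈ Finset.range n,
          (if k' < n-1 then (if n-1 = n-1 then -((n:ℤ) - 2 - k') else -(((n-1:ℕ):ℤ) - k')) else 0)
            = (if k' < n-1 then -((n:ℤ) - 2 - k') else 0) := by
        intro k' _
        rw [if_pos rfl]
      rw [Finset.sum_congr rfl h1, inner_eq (fun k' => -((n:ℤ) - 2 - k')) (n-1) n (by omega)]
  have hP : (∑ k ∈ Finset.range n, ∑ k' ∈ Finset.range n,
      (if k' < k then (if k = n-1 then (0:ℤ) else -1) else 0))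
      = ∑ k ∈ Finset.range (n-1), (-(k:ℤ)) := by
    rw [hsplit]
    have htoprow : (∑ k' ∈ Finset.range n,
        (if k' < n-1 then (if n-1 = n-1 then (0:ℤ) else -1) else 0)) = 0 := by
      apply Finset.sum_eq_zero
      intro k' _
      rw [if_pos rfl]
      split <;> rfl
    rw [htoprow, add_zero]
    refine Finset.sum_congr rfl (fun k hk => ?_)
    have hkn : k < n - 1 := Finset.mem_range.mp hk
    have h1 : ∀ k' ∈ Finset.range n,
        (if k' < k then (if k = n-1 then (0:ℤ) else -1) else 0)
          = (if k' < k then (-1:ℤ) else 0) := by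
      intro k' _
      rw [if_neg (by omega : ¬ k = n-1)]
    rw [Finset.sum_congr rfl h1, inner_eq (fun _ => (-1:ℤ)) k n (by omega)]
    simp
  -- the closed forms
  have hrow : ∀ k : ℕ, 6 * ((-(k:ℤ)) - (∑ k' ∈ Finset.range k, (-((k:ℤ) - k'))))
      = 3 * (k:ℤ) * ((k:ℤ) - 1) := by
    intro k
    have h2 := t2 k
    have : (∑ k' ∈ Finset.range k, (-((k:ℤ) - k')))
        = -(∑ k' ∈ Finset.range k, ((k:ℤ) - k')) := by
      rw [← Finset.sum_neg_distrib]
    rw [this]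
    linarith
  have hsum1 : 6 * ((∑ k ∈ Finset.range (n-1), (-(k:ℤ)))
      - (∑ k ∈ Finset.range (n-1), ∑ k' ∈ Finset.range k, (-((k:ℤ) - k'))))
      = ((n-1:ℕ):ℤ) * (((n-1:ℕ):ℤ) - 1) * (((n-1:ℕ):ℤ) - 2) := by
    rw [← Finset.sum_sub_distrib, Finset.mul_sum]
    rw [Finset.sum_congr rfl (fun k _ => hrow k)]
    exact u2 (n-1)
  have hsum2 : 2 * (∑ k' ∈ Finset.range (n-1), ((n:ℤ) - 2 - k'))
      = ((n-1:ℕ):ℤ) * (((n-1:ℕ):ℤ) - 1) := by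
    have h3 := t3 (n-1)
    have : ∀ k' ∈ Finset.range (n-1), ((n:ℤ) - 2 - (k':ℤ)) = (((n-1:ℕ)):ℤ) - 1 - k' := by
      intro k' _
      omega
    rw [Finset.sum_congr rfl this]
    exact h3
  have hneg2 : (∑ k' ∈ Finset.range (n-1), (-((n:ℤ) - 2 - k')))
      = -(∑ k' ∈ Finset.range (n-1), ((n:ℤ) - 2 - k')) := by
    rw [← Finset.sum_neg_distrib]
  have hchoose : ((n.choose 3 : ℕ) : ℤ) * 6 = (n:ℤ) * ((n:ℤ)-1) * ((n:ℤ)-2) := by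
    obtain ⟨m, rfl⟩ : ∃ m, n = m + 3 := ⟨n - 3, by omega⟩
    have := choose3_id m
    push_cast at this ⊢
    linear_combination this
  have hc1 : ((n-1:ℕ):ℤ) = (n:ℤ) - 1 := by omega
  rw [hPeval, hP]
  rw [hB] at hQb
  rw [hc1] at hsum1 hsum2
  linarith [hQb, hsum1, hsum2, hchoose, hneg2]

end Step

end AffineGame

theorem fastest_way_to_neg_rho (n : ℕ) [NeZero n] (hn : 3 ≤ n)
    (p : List (ZMod n)) (hp : IsPlay n 0 (rho n 0) p)
    (hend : ∃ a : ZMod n, playResult n (rho n 0) p = fun j => -(rho n a j)) :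
    n.choose 3 ≤ p.length := by
  obtain ⟨a, ha⟩ := hend
  obtain ⟨q, e', hg, hPhiEq, hband⟩ :=
    AffineGame.sim hn p (rho n 0) (AffineGame.p0 n) (Equiv.refl _) hp (AffineGame.good_init hn)
  rw [ha] at hg
  have hres := AffineGame.end_struct hn a q e' hg
  have hfin := AffineGame.final hn a q hres hband
  have h1 : ((n.choose 3 : ℕ) : ℤ) ≤ (p.length : ℤ) := by linarith [hfin, hPhiEq]
  exact_mod_cast h1
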